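/- Let q ∈ ℝ^d be a unit vector and let x₁, …, x_m ∈ ℝ^d be unit vectors with ‖q − x_i‖ = ρ for all i. Let r₁, …, r_ℓ be i.i.d. standard Gaussian random vectors in ℝ^d and define hash codes g(y) = (h_{r₁}(y), …, h_{r_ℓ}(y)) with h_r(y) = sign(⟨r, y⟩). Then for every δ ∈ (0,1), with probability at least 1 − m·δ over the choice of r₁, …, r_ℓ, for all pairs i, j ∈ {1, …, m}: |d_H(g(q), g(x_i)) − d_H(g(q), g(x_j))| ≤ 2·ℓ·√(log(2/δ)/(2ℓ)); i.e., the hash code of q is almost equidistant (in Hamming distance) from the hash codes of all the x_i. -/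

import Mathlib

open MeasureTheory ProbabilityTheory Real

noncomputable section

/-- The sign-hash value: `sign ∈ {−1,+1}` with the fixed convention `sign 0 = 1`. -/
def sgn (x : ℝ) : ℝ := if 0 ≤ x then 1 else -1

/-- The standard Gaussian measure `γ^d` on `ℝ^d`, i.e. the `d`-fold product of `N(0,1)`,
transported to `EuclideanSpace ℝ (Fin d)`. -/
def stdGaussian (d : ℕ) : Measure (EuclideanSpace ℝ (Fin d)) :=
  (Measure.pi fun _ : Fin d => gaussianReal 0 1).map
    (MeasurableEquiv.toLp 2 (Fin d → ℝ))


lemma bern_mgf_bound {p : ℝ} (h0 : 0 ≤ p) (h1 : p ≤ 1) (s : ℝ) :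
    (1 - p) + p * exp s ≤ exp (s * p + s ^ 2 / 8) := by
  set u : ℝ → ℝ := fun t => 1 - p + p * exp t with hu_def
  have hu_pos : ∀ t, 0 < u t := by
    intro t
    show 0 < 1 - p + p * exp t
    rcases eq_or_lt_of_le h0 with h | h
    · simp [← h]
    · have he := exp_pos t
      nlinarith
  set g : ℝ → ℝ := fun t => p * exp t / u t with hg_def
  set ψd : ℝ → ℝ := fun t => p + t / 4 - g t with hψd_def
  set ψ : ℝ → ℝ := fun t => t * p + t ^ 2 / 8 - log (u t) with hψ_def
  have hu_deriv : ∀ t, HasDerivAt u (p * exp t) t := by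
    intro t
    exact ((hasDerivAt_exp t).const_mul p).const_add (1 - p)
  have hlog_deriv : ∀ t, HasDerivAt (fun t => log (u t)) (g t) t := by
    intro t
    exact (hu_deriv t).log (hu_pos t).ne'
  have hψ_deriv : ∀ t, HasDerivAt ψ (p + t / 4 - g t) t := by
    intro t
    have h1' : HasDerivAt (fun t : ℝ => t * p) p t := by
      simpa using (hasDerivAt_id t).mul_const p
    have h2' : HasDerivAt (fun t : ℝ => t ^ 2 / 8) (t / 4) t := by
      have := (hasDerivAt_pow 2 t).div_const 8
      simpa [mul_comm] using this.congr_deriv (by ring)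
    exact (h1'.add h2').sub (hlog_deriv t)
  have hg_deriv : ∀ t, HasDerivAt g ((p * exp t * u t - p * exp t * (p * exp t)) / (u t) ^ 2) t := by
    intro t
    exact ((hasDerivAt_exp t).const_mul p).div (hu_deriv t) (hu_pos t).ne'
  have hgd_le : ∀ t, (p * exp t * u t - p * exp t * (p * exp t)) / (u t) ^ 2 ≤ 1 / 4 := by
    intro t
    rw [div_le_iff₀ (pow_pos (hu_pos t) 2)]
    have he := exp_pos t
    have hut : u t = 1 - p + p * exp t := rfl
    nlinarith [sq_nonneg (1 - p - p * exp t)]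
  have hψd_deriv : ∀ t, HasDerivAt ψd
      (1 / 4 - (p * exp t * u t - p * exp t * (p * exp t)) / (u t) ^ 2) t := by
    intro t
    have h2' : HasDerivAt (fun t : ℝ => p + t / 4) (1 / 4) t := by
      simpa using ((hasDerivAt_id t).div_const 4).const_add p
    exact h2'.sub (hg_deriv t)
  have hψd_mono : Monotone ψd := by
    apply monotone_of_deriv_nonneg
    · exact fun t => (hψd_deriv t).differentiableAt
    · intro t
      rw [(hψd_deriv t).deriv]
      linarith [hgd_le t]
  have hψd_zero : ψd 0 = 0 := by
    simp [hψd_def, hg_def, hu_def]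
  have hψ_nonneg : ∀ t, 0 ≤ ψ t := by
    intro t
    have hψ0 : ψ 0 = 0 := by simp [hψ_def, hu_def]
    rcases le_or_gt 0 t with ht | ht
    · have : MonotoneOn ψ (Set.Ici 0) := by
        apply monotoneOn_of_deriv_nonneg (convex_Ici 0)
          (fun x _ => ((hψ_deriv x).differentiableAt).continuousAt.continuousWithinAt)
          (fun x hx => ((hψ_deriv x).differentiableAt).differentiableWithinAt)
        intro x hx
        rw [(hψ_deriv x).deriv]
        have := hψd_mono (le_of_lt (by simpa [interior_Ici] using hx) : (0:ℝ) ≤ x)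
        rw [hψd_zero] at this
        simpa [hψd_def] using this
      have := this Set.self_mem_Ici (Set.mem_Ici.2 ht) ht
      rwa [hψ0] at this
    · have : AntitoneOn ψ (Set.Iic 0) := by
        apply antitoneOn_of_deriv_nonpos (convex_Iic 0)
          (fun x _ => ((hψ_deriv x).differentiableAt).continuousAt.continuousWithinAt)
          (fun x hx => ((hψ_deriv x).differentiableAt).differentiableWithinAt)
        intro x hx
        rw [(hψ_deriv x).deriv]
        have := hψd_mono (le_of_lt (by simpa [interior_Iic] using hx) : x ≤ 0)
        rw [hψd_zero] at this
        simpa [hψd_def] using this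
      have := this (Set.mem_Iic.2 ht.le) Set.self_mem_Iic ht.le
      rwa [hψ0] at this
  have := hψ_nonneg s
  have hlog : log (u s) ≤ s * p + s ^ 2 / 8 := by
    simp only [hψ_def] at this; linarith
  calc u s ≤ exp (log (u s)) := by rw [exp_log (hu_pos s)]
    _ ≤ exp (s * p + s ^ 2 / 8) := exp_le_exp.2 hlog



lemma indicator_sum_tail {Ω : Type*} [MeasurableSpace Ω] (μ : Measure Ω) [IsProbabilityMeasure μ]
    {n : ℕ} (hn : 0 < n) (Y : Fin n → Ω → ℝ) (hmeas : ∀ b, Measurable (Y b))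
    (hind : iIndepFun Y μ)
    (hval : ∀ b ω, Y b ω = 0 ∨ Y b ω = 1)
    (p : ℝ) (hp : ∀ b, ∫ ω, Y b ω ∂μ = p)
    (t : ℝ) (ht : 0 ≤ t) :
    μ {ω | (n : ℝ) * p + t ≤ ∑ b, Y b ω} ≤ ENNReal.ofReal (exp (-(2 * t ^ 2 / n))) := by
  have hY01 : ∀ b ω, 0 ≤ Y b ω ∧ Y b ω ≤ 1 := by
    intro b ω; rcases hval b ω with h | h <;> simp [h]
  have hYint : ∀ b, Integrable (Y b) μ := by
    intro b
    refine Integrable.mono' (integrable_const 1) (hmeas b).aestronglyMeasurable ?_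
    filter_upwards with ω
    rw [norm_eq_abs, abs_le]
    constructor <;> linarith [(hY01 b ω).1, (hY01 b ω).2]
  have hp0 : 0 ≤ p := by
    rw [← hp ⟨0, hn⟩]
    exact integral_nonneg fun ω => (hY01 _ ω).1
  have hp1 : p ≤ 1 := by
    rw [← hp ⟨0, hn⟩]
    calc ∫ ω, Y ⟨0, hn⟩ ω ∂μ ≤ ∫ _, (1 : ℝ) ∂μ :=
          integral_mono (hYint _) (integrable_const 1) fun ω => (hY01 _ ω).2
      _ = 1 := by simp
  set s : ℝ := 4 * t / n with hs_def
  have hs0 : 0 ≤ s := by positivity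
  -- mgf of each Y b
  have hmgf : ∀ b, mgf (Y b) μ s = (1 - p) + p * exp s := by
    intro b
    have hpt : ∀ ω, exp (s * Y b ω) = 1 + (exp s - 1) * Y b ω := by
      intro ω; rcases hval b ω with h | h <;> simp [h]
    unfold mgf
    rw [integral_congr_ae (Filter.Eventually.of_forall hpt),
      integral_add (integrable_const 1) ((hYint b).const_mul _),
      MeasureTheory.integral_const_mul, hp b]
    simp; ring
  -- mgf of the sum
  set X : Ω → ℝ := fun ω => ∑ b, Y b ω with hX_def
  have hXmeas : Measurable X := by
    apply Finset.measurable_sum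
    exact fun b _ => hmeas b
  have hXle : ∀ ω, 0 ≤ X ω ∧ X ω ≤ n := by
    intro ω
    constructor
    · exact Finset.sum_nonneg fun b _ => (hY01 b ω).1
    · calc X ω ≤ ∑ _b : Fin n, (1:ℝ) := Finset.sum_le_sum fun b _ => (hY01 b ω).2
        _ = n := by simp
  have hXint : Integrable (fun ω => exp (s * X ω)) μ := by
    refine Integrable.mono' (integrable_const (exp (s * n)))
      ((hXmeas.const_mul s).exp.aestronglyMeasurable) ?_
    filter_upwards with ω
    rw [norm_eq_abs, abs_of_pos (exp_pos _), exp_le_exp]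
    exact mul_le_mul_of_nonneg_left (hXle ω).2 hs0
  have hmgfX : mgf X μ s = ((1 - p) + p * exp s) ^ n := by
    have := hind.mgf_sum hmeas Finset.univ (t := s)
    simp only [hX_def]
    rw [show (fun ω => ∑ b, Y b ω) = ∑ b : Fin n, Y b by ext ω; simp]
    rw [this]
    simp [hmgf]
  have hmgfX_le : mgf X μ s ≤ exp (n * (s * p) + n * s ^ 2 / 8) := by
    rw [hmgfX]
    calc ((1 - p) + p * exp s) ^ n ≤ (exp (s * p + s ^ 2 / 8)) ^ n := by
          apply pow_le_pow_left₀ _ (bern_mgf_bound hp0 hp1 s)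
          have := exp_pos s; nlinarith
      _ = exp (n * (s * p) + n * s ^ 2 / 8) := by
          rw [← exp_nat_mul]; ring_nf
  have key := measure_ge_le_exp_mul_mgf (X := X) (μ := μ) (t := s) ((n : ℝ) * p + t) hs0 hXint
  have hfin : μ {ω | (n : ℝ) * p + t ≤ X ω} ≠ ⊤ := measure_ne_top μ _
  rw [← ENNReal.ofReal_toReal hfin]
  apply ENNReal.ofReal_le_ofReal
  calc (μ {ω | (n : ℝ) * p + t ≤ X ω}).toReal
      ≤ exp (-s * ((n : ℝ) * p + t)) * mgf X μ s := key
    _ ≤ exp (-s * ((n : ℝ) * p + t)) * exp (n * (s * p) + n * s ^ 2 / 8) :=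
        mul_le_mul_of_nonneg_left hmgfX_le (le_of_lt (exp_pos _))
    _ = exp (-s * ((n : ℝ) * p + t) + (n * (s * p) + n * s ^ 2 / 8)) := by rw [← exp_add]
    _ = exp (-(2 * t ^ 2 / n)) := by
        congr 1
        have hn' : (n : ℝ) ≠ 0 := Nat.cast_ne_zero.2 hn.ne'
        simp only [hs_def]
        field_simp
        ring




lemma map_withDensity_mequiv {α β : Type*} [MeasurableSpace α] [MeasurableSpace β]
    (e : α ≃ᵐ β) (μ : Measure α) (f : β → ENNReal) (hf : Measurable f) :
    (μ.withDensity (f ∘ e)).map e = (μ.map e).withDensity f := by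
  ext s hs
  rw [Measure.map_apply e.measurable hs, withDensity_apply _ (e.measurable hs),
    withDensity_apply _ hs, setLIntegral_map hs hf e.measurable]
  rfl

-- product of 1-dim gaussians as density against pi volume
lemma pi_gaussian_eq_withDensity (d : ℕ) :
    (Measure.pi fun _ : Fin d => gaussianReal 0 1) =
      (volume : Measure (Fin d → ℝ)).withDensity
        (fun x => ∏ i, gaussianPDF 0 1 (x i)) := by
  apply Measure.pi_eq
  intro s hs
  have hmeas_pdf : Measurable (gaussianPDFReal 0 1) := measurable_gaussianPDFReal 0 1
  rw [withDensity_apply _ (MeasurableSet.univ_pi hs)]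
  have hind : ∀ x : Fin d → ℝ,
      (Set.univ.pi s).indicator (fun x => ∏ i, gaussianPDF 0 1 (x i)) x =
        ENNReal.ofReal (∏ i, (s i).indicator (gaussianPDFReal 0 1) (x i)) := by
    intro x
    by_cases hx : x ∈ Set.univ.pi s
    · rw [Set.indicator_of_mem hx]
      rw [ENNReal.ofReal_prod_of_nonneg (fun i _ => Set.indicator_nonneg
        (fun y _ => gaussianPDFReal_nonneg 0 1 y) _)]
      congr 1
      ext i
      rw [Set.indicator_of_mem (hx i (Set.mem_univ i))]
      rfl
    · rw [Set.indicator_of_notMem hx]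
      simp only [Set.mem_pi, Set.mem_univ, forall_true_left] at hx
      push_neg at hx
      obtain ⟨i, hi⟩ := hx
      rw [eq_comm, ENNReal.ofReal_eq_zero]
      apply le_of_eq
      rw [Finset.prod_eq_zero (Finset.mem_univ i)]
      rw [Set.indicator_of_notMem hi]
  rw [← lintegral_indicator (MeasurableSet.univ_pi hs)]
  rw [lintegral_congr hind]
  have hint : ∀ i : Fin d, Integrable ((s i).indicator (gaussianPDFReal 0 1)) := by
    intro i
    exact (integrable_gaussianPDFReal 0 1).indicator (hs i)
  rw [← ofReal_integral_eq_lintegral_ofReal]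
  · rw [MeasureTheory.volume_pi] at *
    rw [show (fun x : Fin d → ℝ => ∏ i, (s i).indicator (gaussianPDFReal 0 1) (x i)) =
      (fun x : Fin d → ℝ => ∏ i, (fun i y => (s i).indicator (gaussianPDFReal 0 1) y) i (x i))
      from rfl]
    rw [MeasureTheory.integral_fintype_prod_eq_prod
      (fun i y => (s i).indicator (gaussianPDFReal 0 1) y)]
    rw [ENNReal.ofReal_prod_of_nonneg]
    · congr 1
      ext i
      rw [integral_indicator (hs i)]
      rw [gaussianReal_of_var_ne_zero 0 one_ne_zero, withDensity_apply _ (hs i)]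
      exact ofReal_integral_eq_lintegral_ofReal ((integrable_gaussianPDFReal 0 1).restrict)
        (Filter.Eventually.of_forall fun y => gaussianPDFReal_nonneg 0 1 y)
    · intro i _
      exact integral_nonneg fun y => Set.indicator_nonneg
        (fun z _ => gaussianPDFReal_nonneg 0 1 z) _
  · exact Integrable.fin_nat_prod fun i => hint i
  · exact Filter.Eventually.of_forall fun x => Finset.prod_nonneg fun i _ =>
      Set.indicator_nonneg (fun z _ => gaussianPDFReal_nonneg 0 1 z) _

lemma stdGaussian_eq_withDensity (d : ℕ) :
    stdGaussian d = (volume : Measure (EuclideanSpace ℝ (Fin d))).withDensity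
      (fun y => ENNReal.ofReal ((Real.sqrt (2 * π))⁻¹ ^ d * exp (- ‖y‖ ^ 2 / 2))) := by
  have hf : Measurable (fun y : EuclideanSpace ℝ (Fin d) =>
      ENNReal.ofReal ((Real.sqrt (2 * π))⁻¹ ^ d * exp (- ‖y‖ ^ 2 / 2))) := by
    apply ENNReal.measurable_ofReal.comp
    apply Measurable.const_mul
    exact (measurable_norm.pow_const 2).neg.div_const 2 |>.exp
  have key : ∀ y : EuclideanSpace ℝ (Fin d),
      (∏ i, gaussianPDF 0 1 (y i)) =
        ENNReal.ofReal ((Real.sqrt (2 * π))⁻¹ ^ d * exp (- ‖y‖ ^ 2 / 2)) := by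
    intro y
    rw [show (fun i : Fin d => gaussianPDF 0 1 (y i)) =
      (fun i : Fin d => ENNReal.ofReal (gaussianPDFReal 0 1 (y i))) from rfl,
      ← ENNReal.ofReal_prod_of_nonneg (fun i _ => gaussianPDFReal_nonneg 0 1 _)]
    congr 1
    have hnorm : ‖y‖ ^ 2 = ∑ i, (y i) ^ 2 := by
      rw [EuclideanSpace.norm_eq, sq_sqrt (Finset.sum_nonneg fun i _ => sq_nonneg _)]
      simp [sq_abs]
    simp only [gaussianPDFReal, NNReal.coe_one, mul_one, sub_zero]
    rw [Finset.prod_mul_distrib, Finset.prod_const, ← Real.exp_sum, Finset.card_univ,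
      Fintype.card_fin, hnorm]
    congr 1
    rw [← Finset.sum_div, ← Finset.sum_neg_distrib]
  -- now transport
  unfold _root_.stdGaussian
  rw [pi_gaussian_eq_withDensity]
  have hFe : (fun x : Fin d → ℝ => ∏ i, gaussianPDF 0 1 (x i)) =
      ((fun y : EuclideanSpace ℝ (Fin d) =>
        ENNReal.ofReal ((Real.sqrt (2 * π))⁻¹ ^ d * exp (- ‖y‖ ^ 2 / 2))) ∘
        MeasurableEquiv.toLp 2 (Fin d → ℝ)) := by
    ext x
    rw [Function.comp_apply, ← key (MeasurableEquiv.toLp 2 (Fin d → ℝ) x)]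
    rfl
  rw [hFe, map_withDensity_mequiv _ _ _ hf, ← MeasurableEquiv.symm_symm (MeasurableEquiv.toLp 2 (Fin d → ℝ)),
    (MeasurePreserving.symm _ (EuclideanSpace.volume_preserving_symm_measurableEquiv_toLp (Fin d))).map_eq]






lemma stdGaussian_map_isometry (d : ℕ)
    (e : EuclideanSpace ℝ (Fin d) ≃ₗᵢ[ℝ] EuclideanSpace ℝ (Fin d)) :
    (stdGaussian d).map e = stdGaussian d := by
  have hf : Measurable (fun y : EuclideanSpace ℝ (Fin d) =>
      ENNReal.ofReal ((Real.sqrt (2 * π))⁻¹ ^ d * exp (- ‖y‖ ^ 2 / 2))) := by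
    apply ENNReal.measurable_ofReal.comp
    exact ((measurable_norm.pow_const 2).neg.div_const 2).exp.const_mul _
  set f : EuclideanSpace ℝ (Fin d) → ENNReal := fun y =>
    ENNReal.ofReal ((Real.sqrt (2 * π))⁻¹ ^ d * exp (- ‖y‖ ^ 2 / 2)) with hf_def
  set e' : EuclideanSpace ℝ (Fin d) ≃ᵐ EuclideanSpace ℝ (Fin d) :=
    e.toHomeomorph.toMeasurableEquiv with he'_def
  have hcoe : (⇑e' : EuclideanSpace ℝ (Fin d) → EuclideanSpace ℝ (Fin d)) = ⇑e := rfl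
  have hfe : f ∘ ⇑e' = f := by
    ext y
    simp only [Function.comp_apply, hf_def, hcoe]
    rw [e.norm_map]
  rw [stdGaussian_eq_withDensity, ← hcoe, ← hf_def, ← hfe, map_withDensity_mequiv e' _ _ hf,
    hcoe, e.measurePreserving.map_eq, ← hcoe, hfe]

lemma stdGaussian_preimage (d : ℕ)
    (e : EuclideanSpace ℝ (Fin d) ≃ₗᵢ[ℝ] EuclideanSpace ℝ (Fin d))
    {S : Set (EuclideanSpace ℝ (Fin d))} (hS : MeasurableSet S) :
    stdGaussian d (⇑e ⁻¹' S) = stdGaussian d S := by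
  rw [← Measure.map_apply e.continuous.measurable hS, stdGaussian_map_isometry]



lemma aux_two_le {d : ℕ} (q u : EuclideanSpace ℝ (Fin d))
    (hqq : (inner ℝ q q : ℝ) = 1) (hqu : (inner ℝ q u : ℝ) = 0)
    (huq : (inner ℝ u q : ℝ) = 0) (huu : (inner ℝ u u : ℝ) = 1) : 2 ≤ d := by
  have hqn : ‖q‖ = 1 := by
    have h := real_inner_self_eq_norm_sq q; rw [hqq] at h; nlinarith [norm_nonneg q]
  have hun : ‖u‖ = 1 := by
    have h := real_inner_self_eq_norm_sq u; rw [huu] at h; nlinarith [norm_nonneg u]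
  have hon2 : Orthonormal ℝ (![q, u] : Fin 2 → EuclideanSpace ℝ (Fin d)) := by
    rw [orthonormal_iff_ite]
    intro i j
    fin_cases i <;> fin_cases j <;>
      simp [Matrix.cons_val_zero, Matrix.cons_val_one, Matrix.head_cons, hqq, hqu, huq, huu, hqn, hun]
  have := hon2.linearIndependent.fintype_card_le_finrank
  simpa [finrank_euclideanSpace_fin] using this

lemma mk_onb {d : ℕ} (hd2 : 2 ≤ d) (q w : EuclideanSpace ℝ (Fin d))
    (hqq : (inner ℝ q q : ℝ) = 1) (hqw : (inner ℝ q w : ℝ) = 0)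
    (hwq : (inner ℝ w q : ℝ) = 0) (hww : (inner ℝ w w : ℝ) = 1) :
    ∃ B : OrthonormalBasis (Fin d) ℝ (EuclideanSpace ℝ (Fin d)),
      B ⟨0, by omega⟩ = q ∧ B ⟨1, by omega⟩ = w := by
  set i0 : Fin d := ⟨0, by omega⟩ with hi0_def
  set i1 : Fin d := ⟨1, by omega⟩ with hi1_def
  have h01 : i0 ≠ i1 := by simp [hi0_def, hi1_def, Fin.ext_iff]
  have hcard : Module.finrank ℝ (EuclideanSpace ℝ (Fin d)) = Fintype.card (Fin d) := by
    simp [finrank_euclideanSpace_fin]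
  set V : Fin d → EuclideanSpace ℝ (Fin d) :=
    fun i => if i = i0 then q else if i = i1 then w else 0 with hV_def
  have hV0 : V i0 = q := by simp [hV_def]
  have hV1 : V i1 = w := by simp [hV_def, h01.symm]
  have hqn : ‖q‖ = 1 := by
    have h := real_inner_self_eq_norm_sq q; rw [hqq] at h; nlinarith [norm_nonneg q]
  have hwn : ‖w‖ = 1 := by
    have h := real_inner_self_eq_norm_sq w; rw [hww] at h; nlinarith [norm_nonneg w]
  have hon : Orthonormal ℝ (({i0, i1} : Set (Fin d)).restrict V) := by
    rw [orthonormal_iff_ite]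
    rintro ⟨i, hi⟩ ⟨j, hj⟩
    simp only [Set.mem_insert_iff, Set.mem_singleton_iff] at hi hj
    rcases hi with rfl | rfl <;> rcases hj with rfl | rfl <;>
      simp [Set.restrict_apply, Set.restrict, hV0, hV1, h01, h01.symm, hqq, hqw, hwq, hww, hqn, hwn,
        Subtype.mk_eq_mk]
  obtain ⟨B, hB⟩ := hon.exists_orthonormalBasis_extension_of_card_eq hcard
  exact ⟨B, by rw [hB i0 (by simp), hV0], by rw [hB i1 (by simp), hV1]⟩

lemma exists_isometry_fixing (d : ℕ) (q a b : EuclideanSpace ℝ (Fin d))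
    (hq : ‖q‖ = 1) (ha : ‖a‖ = 1) (hb : ‖b‖ = 1)
    (hab : (inner ℝ q a : ℝ) = inner ℝ q b) :
    ∃ e : EuclideanSpace ℝ (Fin d) ≃ₗᵢ[ℝ] EuclideanSpace ℝ (Fin d), e q = q ∧ e a = b := by
  have hc1 : |(inner ℝ q a : ℝ)| ≤ 1 := by
    have := abs_real_inner_le_norm q a
    rwa [hq, ha, one_mul] at this
  rcases eq_or_lt_of_le hc1 with hceq | hclt
  · rcases abs_eq (by norm_num : (0:ℝ) ≤ 1) |>.mp hceq with h1 | h1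
    · have haq : a = q :=
        ((inner_eq_one_iff_of_norm_eq_one hq ha).mp h1).symm
      have hbq : b = q :=
        ((inner_eq_one_iff_of_norm_eq_one hq hb).mp (hab ▸ h1)).symm
      exact ⟨LinearIsometryEquiv.refl ℝ _, by simp, by simp [haq, hbq]⟩
    · have haq : a = -q := by
        have h2 : (inner ℝ q (-a) : ℝ) = 1 := by rw [inner_neg_right, h1]; norm_num
        have h3 := (inner_eq_one_iff_of_norm_eq_one hq (by rw [norm_neg]; exact ha)).mp h2
        exact (neg_eq_iff_eq_neg.mp h3.symm)
      have hbq : b = -q := by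
        have h2 : (inner ℝ q (-b) : ℝ) = 1 := by
          rw [inner_neg_right, ← hab, h1]; norm_num
        have h3 := (inner_eq_one_iff_of_norm_eq_one hq (by rw [norm_neg]; exact hb)).mp h2
        exact (neg_eq_iff_eq_neg.mp h3.symm)
      exact ⟨LinearIsometryEquiv.refl ℝ _, by simp, by simp [haq, hbq]⟩
  · set c : ℝ := inner ℝ q a with hc_def
    have hc2 : c ^ 2 < 1 := by
      have := abs_lt.mp hclt
      nlinarith [this.1, this.2]
    set s : ℝ := Real.sqrt (1 - c ^ 2) with hs_def
    have hs_pos : 0 < s := Real.sqrt_pos.mpr (by linarith)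
    set u : EuclideanSpace ℝ (Fin d) := s⁻¹ • (a - c • q) with hu_def
    set v : EuclideanSpace ℝ (Fin d) := s⁻¹ • (b - c • q) with hv_def
    have hqq : (inner ℝ q q : ℝ) = 1 := by
      rw [real_inner_self_eq_norm_sq, hq]; norm_num
    have key : ∀ w : EuclideanSpace ℝ (Fin d), ‖w‖ = 1 → (inner ℝ q w : ℝ) = c →
        (inner ℝ q (s⁻¹ • (w - c • q)) : ℝ) = 0 ∧ ‖s⁻¹ • (w - c • q)‖ = 1 := by
      intro w hw hcw
      have hwq : (inner ℝ w q : ℝ) = c := by rw [real_inner_comm]; exact hcw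
      have h1 : (inner ℝ q (w - c • q) : ℝ) = 0 := by
        rw [inner_sub_right, real_inner_smul_right, hcw, hqq]; ring
      refine ⟨?_, ?_⟩
      · rw [real_inner_smul_right, h1]; ring
      · have hnsq : ‖w - c • q‖ ^ 2 = 1 - c ^ 2 := by
          rw [norm_sub_sq_real, real_inner_smul_right, hwq, norm_smul, hq, hw]
          simp [norm_eq_abs]
          nlinarith [sq_abs c]
        have hns : ‖w - c • q‖ = s := by
          rw [hs_def, ← hnsq]
          exact (Real.sqrt_sq (norm_nonneg _)).symm
        rw [norm_smul, hns, norm_inv, norm_eq_abs, abs_of_pos hs_pos]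
        field_simp
    obtain ⟨hqu, hu1⟩ := key a ha rfl
    obtain ⟨hqv, hv1⟩ := key b hb hab.symm
    have huq : (inner ℝ u q : ℝ) = 0 := by rw [real_inner_comm]; exact hqu
    have hvq : (inner ℝ v q : ℝ) = 0 := by rw [real_inner_comm]; exact hqv
    have huu : (inner ℝ u u : ℝ) = 1 := by
      rw [real_inner_self_eq_norm_sq, hu1]; norm_num
    have hvv : (inner ℝ v v : ℝ) = 1 := by
      rw [real_inner_self_eq_norm_sq, hv1]; norm_num
    have hd2 : 2 ≤ d := aux_two_le q u hqq hqu huq huu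
    obtain ⟨B₁, hB₁0, hB₁1⟩ := mk_onb hd2 q u hqq hqu huq huu
    obtain ⟨B₂, hB₂0, hB₂1⟩ := mk_onb hd2 q v hqq hqv hvq hvv
    set e : EuclideanSpace ℝ (Fin d) ≃ₗᵢ[ℝ] EuclideanSpace ℝ (Fin d) :=
      B₁.repr.trans B₂.repr.symm with he_def
    have heB : ∀ i, e (B₁ i) = B₂ i := by
      intro i
      simp [he_def, B₁.repr_self, B₂.repr_symm_single]
    have heq : e q = q := by
      conv_lhs => rw [← hB₁0]
      rw [heB, hB₂0]
    have heu : e u = v := by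
      conv_lhs => rw [← hB₁1]
      rw [heB, hB₂1]
    refine ⟨e, heq, ?_⟩
    have hadecomp : a = c • q + s • u := by
      rw [hu_def, smul_smul, mul_inv_cancel₀ hs_pos.ne', one_smul]
      abel
    have hbdecomp : b = c • q + s • v := by
      rw [hv_def, smul_smul, mul_inv_cancel₀ hs_pos.ne', one_smul]
      abel
    rw [hadecomp, hbdecomp]
    simp [heq, heu]

/-- For a unit vector `q` and unit vectors `x₁, …, x_m` all at distance `ρ`
from `q`, and i.i.d. standard Gaussian hyperplanes `r₁, …, r_ℓ`, with probability at least
`1 − m·δ` the hash code of `q` is almost equidistant (in Hamming distance) from the hash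
codes of all the `x_i`: for all `i, j`,
`|d_H(g(q), g(x_i)) − d_H(g(q), g(x_j))| ≤ 2·ℓ·√(log(2/δ)/(2ℓ))`. -/
theorem hash_code_almost_equidistant
    {Ω : Type*} [MeasurableSpace Ω] (μ : Measure Ω) [IsProbabilityMeasure μ]
    (d ℓ m : ℕ) (hℓ : 0 < ℓ)
    (q : EuclideanSpace ℝ (Fin d)) (hq : ‖q‖ = 1)
    (x : Fin m → EuclideanSpace ℝ (Fin d)) (hx : ∀ i, ‖x i‖ = 1)
    (ρ : ℝ) (hρ : ∀ i, ‖q - x i‖ = ρ)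
    (R : Fin ℓ → Ω → EuclideanSpace ℝ (Fin d))
    (hmeas : ∀ b, Measurable (R b))
    (hindep : iIndepFun R μ)
    (hgauss : ∀ b, μ.map (R b) = stdGaussian d)
    (dH : Fin m → Ω → ℕ)
    (hdH : ∀ i ω, dH i ω = (Finset.univ.filter fun b : Fin ℓ =>
      sgn (inner ℝ (R b ω) q : ℝ) ≠ sgn (inner ℝ (R b ω) (x i) : ℝ)).card)
    (δ : ℝ) (hδ₀ : 0 < δ) (hδ₁ : δ < 1) :
    ENNReal.ofReal (1 - m * δ) ≤
      μ {ω | ∀ i j : Fin m,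
        |(dH i ω : ℝ) - (dH j ω : ℝ)| ≤
          2 * ℓ * Real.sqrt (Real.log (2 / δ) / (2 * ℓ))} := by

  classical
  set S : Fin m → Set (EuclideanSpace ℝ (Fin d)) := fun i => {r : EuclideanSpace ℝ (Fin d) | sgn (inner ℝ r q : ℝ) ≠ sgn (inner ℝ r (x i) : ℝ)} with hS_def
  -- measurability of sgn ∘ inner
  have hsgn_meas : Measurable sgn := by
    unfold sgn
    exact Measurable.ite measurableSet_Ici measurable_const measurable_const
  have hinner_meas : ∀ y : EuclideanSpace ℝ (Fin d), Measurable (fun r : EuclideanSpace ℝ (Fin d) => (inner ℝ r y : ℝ)) := by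
    intro y
    exact (continuous_id.inner continuous_const).measurable
  have hSm : ∀ i, MeasurableSet (S i) := by
    intro i
    have h1 : Measurable (fun r : EuclideanSpace ℝ (Fin d) => sgn (inner ℝ r q : ℝ)) := hsgn_meas.comp (hinner_meas q)
    have h2 : Measurable (fun r : EuclideanSpace ℝ (Fin d) => sgn (inner ℝ r (x i) : ℝ)) :=
      hsgn_meas.comp (hinner_meas (x i))
    have : S i = {r : EuclideanSpace ℝ (Fin d) | sgn (inner ℝ r q : ℝ) = sgn (inner ℝ r (x i) : ℝ)}ᶜ := by
      ext r; simp [hS_def]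
    rw [this]
    exact (measurableSet_eq_fun h1 h2).compl
  set p : Fin m → ℝ := fun i => (stdGaussian d (S i)).toReal with hp_def
  -- inner ℝ products all equal
  have hinner_eq : ∀ i, (inner ℝ q (x i) : ℝ) = 1 - ρ ^ 2 / 2 := by
    intro i
    have h := norm_sub_sq_real q (x i)
    rw [hρ i, hq, hx i] at h
    nlinarith [h]
  -- p is constant
  have hp_eq : ∀ i j, p i = p j := by
    intro i j
    have hij : (inner ℝ q (x i) : ℝ) = inner ℝ q (x j) := by rw [hinner_eq i, hinner_eq j]
    obtain ⟨e, heq, hea⟩ := exists_isometry_fixing d q (x i) (x j) hq (hx i) (hx j) hij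
    have hpre : ⇑e ⁻¹' (S j) = S i := by
      ext r
      simp only [Set.mem_preimage, hS_def, Set.mem_setOf_eq]
      rw [show (inner ℝ (e r) q : ℝ) = inner ℝ r q by
            conv_lhs => rw [← heq]
            exact e.inner_map_map r q,
          show (inner ℝ (e r) (x j) : ℝ) = inner ℝ r (x i) by
            rw [← hea]; exact e.inner_map_map r (x i)]
    have := stdGaussian_preimage d e (hSm j)
    rw [hpre] at this
    simp only [hp_def, this]
  -- The indicator variables for a fixed i
  set Y : Fin m → Fin ℓ → Ω → ℝ :=
    fun i b ω => (S i).indicator (fun _ => (1:ℝ)) (R b ω) with hY_def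
  have hYmeas : ∀ i b, Measurable (Y i b) :=
    fun i b => (measurable_const.indicator (hSm i)).comp (hmeas b)
  have hYval : ∀ i b ω, Y i b ω = 0 ∨ Y i b ω = 1 := by
    intro i b ω
    by_cases h : R b ω ∈ S i <;> simp [hY_def, h]
  have hYint : ∀ i b, Integrable (Y i b) μ := by
    intro i b
    refine Integrable.mono' (integrable_const 1) (hYmeas i b).aestronglyMeasurable ?_
    filter_upwards with ω
    rcases hYval i b ω with h | h <;> rw [h] <;> norm_num
  have hYmean : ∀ i b, ∫ ω, Y i b ω ∂μ = p i := by
    intro i b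
    have : ∫ ω, Y i b ω ∂μ = ∫ r, (S i).indicator (fun _ => (1:ℝ)) r ∂(μ.map (R b)) := by
      rw [integral_map (hmeas b).aemeasurable]
      exact (measurable_const.indicator (hSm i)).aestronglyMeasurable
    rw [this, hgauss b, integral_indicator_const _ (hSm i)]
    simp [hp_def, Measure.real]
  have hYsum : ∀ i ω, (dH i ω : ℝ) = ∑ b, Y i b ω := by
    intro i ω
    rw [hdH i ω, Finset.card_filter]
    push_cast
    apply Finset.sum_congr rfl
    intro b _
    show _ = Y i b ω
    simp only [hY_def, Set.indicator_apply]
    exact if_congr Iff.rfl rfl rfl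
  have hYindep : ∀ i, iIndepFun (Y i) μ := by
    intro i
    exact hindep.comp (fun b => (S i).indicator (fun _ => (1:ℝ)))
      (fun b => measurable_const.indicator (hSm i))
  -- the deviation parameter
  set L : ℝ := Real.log (2 / δ) with hL_def
  have hL_pos : 0 < L := Real.log_pos (by rw [lt_div_iff₀ hδ₀]; linarith)
  set t : ℝ := ℓ * Real.sqrt (L / (2 * ℓ)) with ht_def
  have hℓR : (0:ℝ) < ℓ := by exact_mod_cast hℓ
  have ht0 : 0 ≤ t := by positivity
  have hexp : Real.exp (-(2 * t ^ 2 / ℓ)) = δ / 2 := by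
    have h1 : t ^ 2 = (ℓ:ℝ) ^ 2 * (L / (2 * ℓ)) := by
      rw [ht_def, mul_pow, Real.sq_sqrt (by positivity)]
    have h2 : 2 * t ^ 2 / ℓ = L := by
      rw [h1]; field_simp
    rw [h2, hL_def, ← Real.log_inv, Real.exp_log (by positivity)]
    rw [show (2 / δ)⁻¹ = δ / 2 by field_simp]
  -- tail bounds
  have tail : ∀ i, μ {ω | ¬ |(dH i ω : ℝ) - ℓ * p i| ≤ t} ≤ ENNReal.ofReal δ := by
    intro i
    have hup := indicator_sum_tail μ hℓ (Y i) (hYmeas i) (hYindep i) (hYval i)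
      (p i) (hYmean i) t ht0
    -- lower tail via 1 - Y
    set Y' : Fin ℓ → Ω → ℝ := fun b ω => 1 - Y i b ω with hY'_def
    have hY'meas : ∀ b, Measurable (Y' b) := fun b => (hYmeas i b).const_sub 1
    have hY'val : ∀ b ω, Y' b ω = 0 ∨ Y' b ω = 1 := by
      intro b ω
      rcases hYval i b ω with h | h <;> simp [hY'_def, h]
    have hY'mean : ∀ b, ∫ ω, Y' b ω ∂μ = 1 - p i := by
      intro b
      rw [hY'_def]
      simp only
      rw [integral_sub (integrable_const 1) (hYint i b), hYmean i b]
      simp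
    have hY'indep : iIndepFun Y' μ := by
      have := hindep.comp (fun b => fun r : EuclideanSpace ℝ (Fin d) => 1 - (S i).indicator (fun _ => (1:ℝ)) r)
        (fun b => (measurable_const.indicator (hSm i)).const_sub 1)
      exact this
    have hdown := indicator_sum_tail μ hℓ Y' hY'meas hY'indep hY'val
      (1 - p i) hY'mean t ht0
    have hsub : {ω | ¬ |(dH i ω : ℝ) - ℓ * p i| ≤ t} ⊆
        {ω | (ℓ:ℝ) * p i + t ≤ ∑ b, Y i b ω} ∪
        {ω | (ℓ:ℝ) * (1 - p i) + t ≤ ∑ b, Y' b ω} := by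
      intro ω hω
      simp only [Set.mem_setOf_eq, not_le] at hω
      have hsum' : ∑ b, Y' b ω = ℓ - ∑ b, Y i b ω := by
        rw [hY'_def]
        rw [Finset.sum_sub_distrib]
        simp
      have hY := hYsum i ω
      rcases abs_cases ((dH i ω : ℝ) - ℓ * p i) with ⟨he, _⟩ | ⟨he, _⟩
      · left
        show (ℓ:ℝ) * p i + t ≤ ∑ b, Y i b ω
        rw [← hY]
        rw [he] at hω
        linarith
      · right
        show (ℓ:ℝ) * (1 - p i) + t ≤ ∑ b, Y' b ω
        rw [hsum', ← hY]
        rw [he] at hω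
        linarith
    calc μ {ω | ¬ |(dH i ω : ℝ) - ℓ * p i| ≤ t}
        ≤ μ ({ω | (ℓ:ℝ) * p i + t ≤ ∑ b, Y i b ω} ∪
          {ω | (ℓ:ℝ) * (1 - p i) + t ≤ ∑ b, Y' b ω}) := measure_mono hsub
      _ ≤ μ {ω | (ℓ:ℝ) * p i + t ≤ ∑ b, Y i b ω} +
          μ {ω | (ℓ:ℝ) * (1 - p i) + t ≤ ∑ b, Y' b ω} := measure_union_le _ _
      _ ≤ ENNReal.ofReal (Real.exp (-(2 * t ^ 2 / ℓ))) +
          ENNReal.ofReal (Real.exp (-(2 * t ^ 2 / ℓ))) := add_le_add hup hdown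
      _ = ENNReal.ofReal δ := by
          rw [hexp, ← ENNReal.ofReal_add (by linarith) (by linarith)]
          norm_num
  -- intersection of good events
  set G : Fin m → Set Ω := fun i => {ω | |(dH i ω : ℝ) - ℓ * p i| ≤ t} with hG_def
  have hGsub : (⋂ i, G i) ⊆ {ω | ∀ i j : Fin m,
      |(dH i ω : ℝ) - (dH j ω : ℝ)| ≤ 2 * ℓ * Real.sqrt (Real.log (2 / δ) / (2 * ℓ))} := by
    intro ω hω
    simp only [Set.mem_iInter, hG_def, Set.mem_setOf_eq] at hω ⊢
    intro i j
    have hi := hω i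
    have hj := hω j
    have hpij : (ℓ:ℝ) * p i = ℓ * p j := by rw [hp_eq i j]
    calc |(dH i ω : ℝ) - (dH j ω : ℝ)|
        = |((dH i ω : ℝ) - ℓ * p i) - ((dH j ω : ℝ) - ℓ * p j)| := by rw [hpij]; ring_nf
      _ ≤ |(dH i ω : ℝ) - ℓ * p i| + |(dH j ω : ℝ) - ℓ * p j| := abs_sub _ _
      _ ≤ t + t := add_le_add hi hj
      _ = 2 * ℓ * Real.sqrt (Real.log (2 / δ) / (2 * ℓ)) := by rw [ht_def, hL_def]; ring
  -- union bound
  have hcompl : μ (⋃ i, (G i)ᶜ) ≤ ENNReal.ofReal (m * δ) := by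
    calc μ (⋃ i, (G i)ᶜ) ≤ ∑ i : Fin m, μ ((G i)ᶜ) := measure_iUnion_fintype_le _ _
      _ ≤ ∑ _i : Fin m, ENNReal.ofReal δ := Finset.sum_le_sum fun i _ => tail i
      _ = m * ENNReal.ofReal δ := by rw [Finset.sum_const, Finset.card_univ, Fintype.card_fin,
            nsmul_eq_mul]
      _ = ENNReal.ofReal (m * δ) := by
          rw [ENNReal.ofReal_mul (by positivity)]
          simp
  have h1 : (1:ENNReal) ≤ μ (⋂ i, G i) + ENNReal.ofReal (m * δ) := by
    calc (1:ENNReal) = μ Set.univ := (measure_univ (μ := μ)).symm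
      _ ≤ μ ((⋂ i, G i) ∪ (⋃ i, (G i)ᶜ)) := by
          apply measure_mono
          intro ω _
          by_cases h : ω ∈ ⋂ i, G i
          · exact Or.inl h
          · right
            simp only [Set.mem_iInter] at h
            push_neg at h
            obtain ⟨i, hi⟩ := h
            exact Set.mem_iUnion.mpr ⟨i, hi⟩
      _ ≤ μ (⋂ i, G i) + μ (⋃ i, (G i)ᶜ) := measure_union_le _ _
      _ ≤ μ (⋂ i, G i) + ENNReal.ofReal (m * δ) := add_le_add le_rfl hcompl
  calc ENNReal.ofReal (1 - m * δ)
      = ENNReal.ofReal 1 - ENNReal.ofReal (m * δ) := ENNReal.ofReal_sub _ (by positivity)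
    _ ≤ μ (⋂ i, G i) := by
        rw [ENNReal.ofReal_one]
        exact tsub_le_iff_right.mpr h1
    _ ≤ μ _ := measure_mono hGsub

end
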